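/- Let Ω ⊆ ℝ^n be a nonempty bounded open set, and for p > 1 define λ_{1,p}(Ω) as the infimum of ∫_Ω ‖∇u‖^p dx / ∫_Ω |u|^p dx over all smooth functions u : ℝ^n → ℝ, not identically zero, with compact support contained in Ω. Then the function p ↦ p · (λ_{1,p}(Ω))^{1/p} is monotone increasing in p: for all 1 < q < p one has q · (λ_{1,q}(Ω))^{1/q} ≤ p · (λ_{1,p}(Ω))^{1/p}. -/

import Mathlib

open MeasureTheory Real
open scoped ENNReal

/-- The variational characterization of the first Dirichlet eigenvalue of the
`p`-Laplacian on `Ω ⊆ ℝ^n`: the infimum of Rayleigh quotients over nonzero smooth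
functions with compact support contained in `Ω`. -/
noncomputable def lambdaOneP {n : ℕ} (Ω : Set (EuclideanSpace ℝ (Fin n))) (p : ℝ) : ℝ :=
  sInf { R : ℝ | ∃ u : EuclideanSpace ℝ (Fin n) → ℝ, ContDiff ℝ (⊤ : ℕ∞) u ∧
    HasCompactSupport u ∧ tsupport u ⊆ Ω ∧ u ≠ 0 ∧
    R = (∫ x in Ω, ‖gradient u x‖ ^ p) / (∫ x in Ω, |u x| ^ p) }

namespace LambdaAux

variable {n : ℕ}

local notation "E" => EuclideanSpace ℝ (Fin n)

/-- The set of Rayleigh quotients. -/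
def raySet (Ω : Set E) (p : ℝ) : Set ℝ :=
  { R : ℝ | ∃ u : E → ℝ, ContDiff ℝ (⊤ : ℕ∞) u ∧
    HasCompactSupport u ∧ tsupport u ⊆ Ω ∧ u ≠ 0 ∧
    R = (∫ x in Ω, ‖gradient u x‖ ^ p) / (∫ x in Ω, |u x| ^ p) }

lemma lambdaOneP_eq (Ω : Set E) (p : ℝ) : lambdaOneP Ω p = sInf (raySet Ω p) := rfl

lemma raySet_nonneg (Ω : Set E) (p : ℝ) : ∀ R ∈ raySet Ω p, 0 ≤ R := by
  rintro R ⟨u, -, -, -, -, rfl⟩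
  exact div_nonneg (integral_nonneg fun x => Real.rpow_nonneg (norm_nonneg _) _)
    (integral_nonneg fun x => Real.rpow_nonneg (abs_nonneg _) _)

lemma raySet_bddBelow (Ω : Set E) (p : ℝ) : BddBelow (raySet Ω p) :=
  ⟨0, fun R hR => raySet_nonneg Ω p R hR⟩

lemma raySet_nonempty (Ω : Set E) (hne : Ω.Nonempty) (hΩ : IsOpen Ω) (p : ℝ) :
    (raySet Ω p).Nonempty := by
  obtain ⟨x, hx⟩ := hne
  obtain ⟨r, hr, hball⟩ := Metric.nhds_basis_closedBall.mem_iff.1 (hΩ.mem_nhds hx)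
  let f : ContDiffBump x := ⟨r/2, r, by positivity, by linarith⟩
  refine ⟨_, f, f.contDiff, f.hasCompactSupport, ?_, ?_, rfl⟩
  · rw [f.tsupport_eq]; exact hball
  · intro h
    have := f.one_of_mem_closedBall (Metric.mem_closedBall_self (by positivity : (0:ℝ) ≤ r/2))
    rw [show (⇑f : E → ℝ) = 0 from h] at this
    simp at this

lemma norm_gradient_eq (f : E → ℝ) (x : E) : ‖gradient f x‖ = ‖fderiv ℝ f x‖ := by
  rw [gradient]; exact (InnerProductSpace.toDual ℝ _).symm.norm_map _

lemma memLp_of_bdd (Ω : Set E) (hbd : Bornology.IsBounded Ω) {f : E → ℝ} (hf : Continuous f)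
    (C : ℝ) (hC : ∀ x, |f x| ≤ C) (r : ℝ≥0∞) : MemLp f r (volume.restrict Ω) := by
  haveI : IsFiniteMeasure (volume.restrict Ω) :=
    ⟨by rw [Measure.restrict_apply_univ]; exact hbd.measure_lt_top⟩
  exact (memLp_top_of_bound hf.aestronglyMeasurable C (ae_of_all _ hC)).mono_exponent le_top

lemma integrable_of_bdd (Ω : Set E) (hbd : Bornology.IsBounded Ω) {f : E → ℝ}
    (hf : Continuous f) (C : ℝ) (hC : ∀ x, |f x| ≤ C) : IntegrableOn f Ω := by
  have := memLp_of_bdd Ω hbd hf C hC 1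
  exact memLp_one_iff_integrable.1 this

lemma setIntegral_pos (Ω : Set E) (hΩ : IsOpen Ω) {g : E → ℝ} (hg : Continuous g)
    (hgnn : ∀ x, 0 ≤ g x) (hx : ∃ x ∈ Ω, g x ≠ 0) (hint : IntegrableOn g Ω) :
    0 < ∫ x in Ω, g x := by
  rw [setIntegral_pos_iff_support_of_nonneg_ae (ae_of_all _ hgnn) hint]
  obtain ⟨x, hxΩ, hgx⟩ := hx
  exact ((hg.isOpen_support.inter hΩ)).measure_pos volume ⟨x, hgx, hxΩ⟩

lemma sq_rpow_half (t r : ℝ) : (t ^ 2) ^ (r / 2) = |t| ^ r := by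
  rw [← sq_abs, ← Real.rpow_natCast |t| 2, ← Real.rpow_mul (abs_nonneg _),
    show ((2:ℕ):ℝ) * (r / 2) = r by push_cast; ring]

set_option maxHeartbeats 2000000 in
lemma core (Ω : Set E) (hΩ : IsOpen Ω) (hbd : Bornology.IsBounded Ω)
    (p q : ℝ) (hq : 1 < q) (hpq : q < p) {u : E → ℝ}
    (hu : ContDiff ℝ (⊤ : ℕ∞) u) (hcs : HasCompactSupport u)
    (hts : tsupport u ⊆ Ω) (hu0 : u ≠ 0) :
    lambdaOneP Ω q ≤
      (p / q) ^ q *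
        ((∫ x in Ω, ‖gradient u x‖ ^ p) / (∫ x in Ω, |u x| ^ p)) ^ (q / p) := by
  have hq0 : (0:ℝ) < q := by linarith
  have hp0 : (0:ℝ) < p := by linarith
  have hq0' : q ≠ 0 := hq0.ne'
  have hp0' : p ≠ 0 := hp0.ne'
  have hpq0 : (0:ℝ) < p - q := by linarith
  have hp2q : (0:ℝ) < p / (2 * q) := by positivity
  have hpq' : (0:ℝ) < p / q := by positivity
  haveI : IsFiniteMeasure (volume.restrict Ω) :=
    ⟨by rw [Measure.restrict_apply_univ]; exact hbd.measure_lt_top⟩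
  have hucont : Continuous u := hu.continuous
  obtain ⟨x₀, hx₀⟩ : ∃ x, u x ≠ 0 := Function.ne_iff.1 hu0
  have hx₀Ω : x₀ ∈ Ω := hts (subset_closure hx₀)
  -- bounds on u and its gradient
  obtain ⟨Cu, hCu⟩ := hcs.exists_bound_of_continuous hucont
  have hCu' : ∀ x, |u x| ≤ Cu := fun x => by simpa using hCu x
  have hCu0 : 0 ≤ Cu := le_trans (abs_nonneg _) (hCu' x₀)
  have hgucont : Continuous fun x => ‖gradient u x‖ := by
    have : Continuous fun x => ‖fderiv ℝ u x‖ := (hu.continuous_fderiv (by simp)).norm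
    simpa only [norm_gradient_eq] using this
  obtain ⟨Cg, hCg⟩ := (hcs.fderiv (𝕜 := ℝ)).exists_bound_of_continuous
    ((hu.continuous_fderiv (by simp)))
  have hCg' : ∀ x, ‖gradient u x‖ ≤ Cg := fun x => by rw [norm_gradient_eq]; exact hCg x
  have hCg0 : 0 ≤ Cg := le_trans (norm_nonneg _) (hCg' x₀)
  set I := ∫ x in Ω, |u x| ^ p with hIdef
  set G := ∫ x in Ω, ‖gradient u x‖ ^ p with hGdef
  have hG : 0 ≤ G := integral_nonneg fun x => Real.rpow_nonneg (norm_nonneg _) _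
  have hI : 0 < I := by
    refine setIntegral_pos Ω hΩ (hucont.abs.rpow_const fun x => Or.inr hp0.le)
      (fun x => Real.rpow_nonneg (abs_nonneg _) _) ⟨x₀, hx₀Ω, ?_⟩
      (integrable_of_bdd Ω hbd (hucont.abs.rpow_const fun x => Or.inr hp0.le) (Cu ^ p) ?_)
    · exact (Real.rpow_pos_of_pos (abs_pos.2 hx₀) p).ne'
    · intro x
      rw [abs_of_nonneg (Real.rpow_nonneg (abs_nonneg _) _)]
      exact Real.rpow_le_rpow (abs_nonneg _) (hCu' x) hp0.le
  -- the key inequality for each ε ∈ (0,1]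
  have key : ∀ ε ∈ Set.Ioc (0:ℝ) 1, lambdaOneP Ω q ≤
      ((p/q)^q * ((∫ x in Ω, (u x ^ 2 + ε ^ 2) ^ (p/2)) ^ ((p-q)/p) * G ^ (q/p))) /
        (∫ x in Ω, |(u x ^ 2 + ε ^ 2) ^ (p/(2*q)) - (ε^2) ^ (p/(2*q))| ^ q) := by
    rintro ε ⟨hε, hε1⟩
    set v : E → ℝ := fun x => (u x ^ 2 + ε ^ 2) ^ (p/(2*q)) - (ε^2) ^ (p/(2*q)) with hvdef
    have hA : ∀ x, (0:ℝ) < u x ^ 2 + ε ^ 2 := fun x => by positivity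
    have hvsmooth : ContDiff ℝ (⊤ : ℕ∞) v := by
      refine ContDiff.sub ?_ contDiff_const
      have h1 : ContDiff ℝ (⊤ : ℕ∞) (fun x => u x ^ 2 + ε ^ 2) := (hu.pow 2).add contDiff_const
      rw [contDiff_iff_contDiffAt] at h1 ⊢
      intro x
      exact (Real.contDiffAt_rpow_const_of_ne (hA x).ne').comp x (h1 x)
    have hvcont : Continuous v := hvsmooth.continuous
    have hvsupp : Function.support v ⊆ Function.support u := by
      intro x hx
      simp only [Function.mem_support] at hx ⊢
      intro hux
      apply hx
      simp [hvdef, hux]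
    have hvts : tsupport v ⊆ Ω := (closure_mono hvsupp).trans hts
    have hvcs : HasCompactSupport v := hcs.mono hvsupp
    have hvnn : ∀ x, 0 ≤ v x := fun x => sub_nonneg.2 <|
      Real.rpow_le_rpow (sq_nonneg ε) (by nlinarith [sq_nonneg (u x)]) hp2q.le
    have hvx₀ : 0 < v x₀ := by
      have h2 : 0 < u x₀ ^ 2 := lt_of_le_of_ne (sq_nonneg _) (Ne.symm (pow_ne_zero 2 hx₀))
      exact sub_pos.2 (Real.rpow_lt_rpow (sq_nonneg ε) (by linarith) hp2q)
    have hv0 : v ≠ 0 := fun h => by rw [h] at hvx₀; simp at hvx₀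
    -- derivative
    set ψ : ℝ → ℝ := fun t => p / (2 * q) * (t ^ 2 + ε ^ 2) ^ (p / (2 * q) - 1) * (2 * t)
      with hψdef
    have hfd : ∀ x, HasFDerivAt v (ψ (u x) • fderiv ℝ u x) x := by
      intro x
      have hφ : HasDerivAt (fun t : ℝ => (t ^ 2 + ε ^ 2) ^ (p / (2 * q)) - (ε ^ 2) ^ (p / (2 * q)))
          (ψ (u x)) (u x) := by
        have h1 : HasDerivAt (fun t : ℝ => t ^ 2 + ε ^ 2) (2 * u x) (u x) := by
          simpa using (hasDerivAt_pow 2 (u x)).add_const (ε ^ 2)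
        have h2 := (h1.rpow_const (p := p / (2 * q)) (Or.inl (hA x).ne')).sub_const
          ((ε ^ 2) ^ (p / (2 * q)))
        refine h2.congr_deriv ?_
        rw [hψdef]; ring
      exact hφ.comp_hasFDerivAt x ((hu.differentiable (by simp)).differentiableAt.hasFDerivAt)
    have hgradv : ∀ x, ‖gradient v x‖ = |ψ (u x)| * ‖gradient u x‖ := by
      intro x
      rw [norm_gradient_eq, norm_gradient_eq, (hfd x).fderiv, norm_smul, Real.norm_eq_abs]
    have hgradvcont : Continuous fun x => ‖gradient v x‖ := by
      have : Continuous fun x => ‖fderiv ℝ v x‖ := (hvsmooth.continuous_fderiv (by simp)).norm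
      simpa only [norm_gradient_eq] using this
    -- pointwise bound on ψ
    have hψbd : ∀ t : ℝ, |ψ t| ≤ p / q * (t ^ 2 + ε ^ 2) ^ ((p - q) / (2 * q)) := by
      intro t
      have hAt : (0:ℝ) < t ^ 2 + ε ^ 2 := by positivity
      have habs : |t| ≤ (t ^ 2 + ε ^ 2) ^ (1/2 : ℝ) := by
        rw [← Real.sqrt_eq_rpow, ← Real.sqrt_sq_eq_abs]
        exact Real.sqrt_le_sqrt (by nlinarith)
      have h0 : 0 < p / (2 * q) := hp2q
      calc |ψ t| = p / q * ((t ^ 2 + ε ^ 2) ^ (p / (2 * q) - 1) * |t|) := by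
            rw [hψdef, abs_mul, abs_mul, abs_of_nonneg h0.le,
              abs_of_nonneg (Real.rpow_nonneg hAt.le _),
              abs_mul, abs_of_nonneg (by norm_num : (0:ℝ) ≤ 2)]
            ring
        _ ≤ p / q * ((t ^ 2 + ε ^ 2) ^ (p / (2 * q) - 1) * (t ^ 2 + ε ^ 2) ^ (1/2 : ℝ)) := by
            gcongr
        _ = p / q * (t ^ 2 + ε ^ 2) ^ ((p - q) / (2 * q)) := by
            rw [← Real.rpow_add hAt]
            congr 1
            field_simp
            ring
    -- pointwise bound on the gradient of v
    have hnum_pt : ∀ x, ‖gradient v x‖ ^ q ≤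
        (p/q)^q * ((u x ^ 2 + ε ^ 2) ^ ((p-q)/2) * ‖gradient u x‖ ^ q) := by
      intro x
      rw [hgradv x]
      calc (|ψ (u x)| * ‖gradient u x‖) ^ q
          ≤ (p / q * (u x ^ 2 + ε ^ 2) ^ ((p - q) / (2 * q)) * ‖gradient u x‖) ^ q := by
            refine Real.rpow_le_rpow (mul_nonneg (abs_nonneg _) (norm_nonneg _)) ?_ hq0.le
            exact mul_le_mul_of_nonneg_right (hψbd (u x)) (norm_nonneg _)
        _ = (p/q)^q * ((u x ^ 2 + ε ^ 2) ^ ((p-q)/2) * ‖gradient u x‖ ^ q) := by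
            rw [Real.mul_rpow (mul_nonneg hpq'.le (Real.rpow_nonneg (hA x).le _)) (norm_nonneg _),
              Real.mul_rpow hpq'.le (Real.rpow_nonneg (hA x).le _),
              ← Real.rpow_mul (hA x).le,
              show (p - q) / (2 * q) * q = (p - q) / 2 by field_simp [hq0'],
              mul_assoc]
    -- integrability and Hölder
    have hAcont : Continuous fun x => (u x ^ 2 + ε ^ 2) ^ ((p-q)/2) :=
      ((hucont.pow 2).add continuous_const).rpow_const fun x => Or.inl (hA x).ne'
    have hAbd : ∀ x : E, |(u x ^ 2 + ε ^ 2) ^ ((p-q)/2)| ≤ (Cu^2+1) ^ ((p-q)/2) := by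
      intro x
      rw [abs_of_nonneg (Real.rpow_nonneg (hA x).le _)]
      refine Real.rpow_le_rpow (hA x).le ?_ (by positivity)
      have h1 := hCu' x
      have h2 : u x ^ 2 ≤ Cu ^ 2 := by nlinarith [sq_abs (u x), abs_nonneg (u x)]
      nlinarith
    have hgqcont : Continuous fun x => ‖gradient u x‖ ^ q :=
      hgucont.rpow_const fun x => Or.inr hq0.le
    have hgqbd : ∀ x : E, |‖gradient u x‖ ^ q| ≤ Cg ^ q := by
      intro x
      rw [abs_of_nonneg (Real.rpow_nonneg (norm_nonneg _) _)]
      exact Real.rpow_le_rpow (norm_nonneg _) (hCg' x) hq0.le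
    have hconj : Real.HolderConjugate (p/(p-q)) (p/q) := by
      rw [Real.holderConjugate_iff]; constructor
      · rw [lt_div_iff₀ hpq0]; linarith
      · rw [inv_div, inv_div, ← add_div, sub_add_cancel, div_self hp0']
    have hmf : MemLp (fun x => (u x ^ 2 + ε ^ 2) ^ ((p-q)/2)) (ENNReal.ofReal (p/(p-q)))
        (volume.restrict Ω) := memLp_of_bdd Ω hbd hAcont _ hAbd _
    have hmg : MemLp (fun x => ‖gradient u x‖ ^ q) (ENNReal.ofReal (p/q))
        (volume.restrict Ω) := memLp_of_bdd Ω hbd hgqcont _ hgqbd _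
    have holder := integral_mul_le_Lp_mul_Lq_of_nonneg hconj
      (ae_of_all _ fun x => Real.rpow_nonneg (hA x).le _)
      (ae_of_all _ fun x => Real.rpow_nonneg (norm_nonneg _) _) hmf hmg
    have holder' : ∫ x in Ω, (u x ^ 2 + ε ^ 2) ^ ((p-q)/2) * ‖gradient u x‖ ^ q ≤
        (∫ x in Ω, (u x ^ 2 + ε ^ 2) ^ (p/2)) ^ ((p-q)/p) * G ^ (q/p) := by
      refine holder.trans_eq ?_
      have e1 : ∫ x in Ω, ((u x ^ 2 + ε ^ 2) ^ ((p-q)/2)) ^ (p/(p-q)) =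
          ∫ x in Ω, (u x ^ 2 + ε ^ 2) ^ (p/2) := by
        refine integral_congr_ae (ae_of_all _ fun x => ?_)
        dsimp only
        rw [← Real.rpow_mul (hA x).le,
          show (p-q)/2 * (p/(p-q)) = p/2 by field_simp [hpq0.ne']]
      have e2 : ∫ x in Ω, (‖gradient u x‖ ^ q) ^ (p/q) = G := by
        refine integral_congr_ae (ae_of_all _ fun x => ?_)
        dsimp only
        rw [← Real.rpow_mul (norm_nonneg _),
          show q * (p/q) = p by field_simp [hq0']]
      rw [e1, e2, one_div, one_div, inv_div, inv_div]
    have hnum : ∫ x in Ω, ‖gradient v x‖ ^ q ≤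
        (p/q)^q * ((∫ x in Ω, (u x ^ 2 + ε ^ 2) ^ (p/2)) ^ ((p-q)/p) * G ^ (q/p)) := by
      have hint1 : IntegrableOn
          (fun x => (p/q)^q * ((u x ^ 2 + ε ^ 2) ^ ((p-q)/2) * ‖gradient u x‖ ^ q)) Ω := by
        refine (integrable_of_bdd Ω hbd (hAcont.mul hgqcont)
          ((Cu^2+1) ^ ((p-q)/2) * Cg ^ q) ?_).const_mul _
        intro x
        rw [Pi.mul_apply, abs_mul]
        exact mul_le_mul (hAbd x) (hgqbd x) (abs_nonneg _)
          (Real.rpow_nonneg (by positivity) _)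
      calc ∫ x in Ω, ‖gradient v x‖ ^ q
          ≤ ∫ x in Ω, (p/q)^q * ((u x ^ 2 + ε ^ 2) ^ ((p-q)/2) * ‖gradient u x‖ ^ q) :=
            integral_mono_of_nonneg
              (ae_of_all _ fun x => Real.rpow_nonneg (norm_nonneg _) _)
              hint1 (ae_of_all _ hnum_pt)
        _ = (p/q)^q * ∫ x in Ω, (u x ^ 2 + ε ^ 2) ^ ((p-q)/2) * ‖gradient u x‖ ^ q :=
            integral_const_mul _ _
        _ ≤ (p/q)^q * ((∫ x in Ω, (u x ^ 2 + ε ^ 2) ^ (p/2)) ^ ((p-q)/p) * G ^ (q/p)) :=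
            mul_le_mul_of_nonneg_left holder' (Real.rpow_nonneg hpq'.le _)
    -- the denominator
    obtain ⟨Cv, hCv⟩ := hvcs.exists_bound_of_continuous hvcont
    have hBint : IntegrableOn (fun x => |v x| ^ q) Ω := by
      refine integrable_of_bdd Ω hbd (hvcont.abs.rpow_const fun x => Or.inr hq0.le) (Cv ^ q) ?_
      intro x
      rw [abs_of_nonneg (Real.rpow_nonneg (abs_nonneg _) _)]
      exact Real.rpow_le_rpow (abs_nonneg _) (by simpa using hCv x) hq0.le
    have hB : 0 < ∫ x in Ω, |v x| ^ q := by
      refine setIntegral_pos Ω hΩ (hvcont.abs.rpow_const fun x => Or.inr hq0.le)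
        (fun x => Real.rpow_nonneg (abs_nonneg _) _) ⟨x₀, hx₀Ω, ?_⟩ hBint
      exact (Real.rpow_pos_of_pos (abs_pos.2 hvx₀.ne') q).ne'
    have hmem : (∫ x in Ω, ‖gradient v x‖ ^ q) / (∫ x in Ω, |v x| ^ q) ∈ raySet Ω q :=
      ⟨v, hvsmooth, hvcs, hvts, hv0, rfl⟩
    have hle : lambdaOneP Ω q ≤ (∫ x in Ω, ‖gradient v x‖ ^ q) / (∫ x in Ω, |v x| ^ q) := by
      rw [lambdaOneP_eq]
      exact csInf_le (raySet_bddBelow _ _) hmem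
    refine hle.trans ?_
    gcongr
  -- now take the limit ε → 0⁺
  set l : Filter ℝ := nhdsWithin (0:ℝ) (Set.Ioi 0) with hldef
  have hmemIoc : Set.Ioc (0:ℝ) 1 ∈ l := Ioc_mem_nhdsGT_of_mem ⟨le_refl 0, zero_lt_one⟩
  have hIeq : ∫ x in Ω, (u x ^ 2) ^ (p/2) = I :=
    integral_congr_ae (ae_of_all _ fun x => sq_rpow_half _ _)
  have hbound_int : IntegrableOn (fun x => (u x ^ 2 + 1) ^ (p/2)) Ω := by
    refine integrable_of_bdd Ω hbd (((hucont.pow 2).add continuous_const).rpow_const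
      (fun x => Or.inr (by positivity))) ((Cu^2+1) ^ (p/2)) fun x => ?_
    rw [abs_of_nonneg (Real.rpow_nonneg (by positivity) _)]
    refine Real.rpow_le_rpow (by positivity) ?_ (by positivity)
    have := hCu' x; nlinarith [sq_abs (u x), abs_nonneg (u x)]
  have htend_base : ∀ (x : E) (r : ℝ), 0 ≤ r →
      Filter.Tendsto (fun ε : ℝ => (u x ^ 2 + ε ^ 2) ^ r) l (nhds ((u x ^ 2) ^ r)) := by
    intro x r hr
    have h1 : Filter.Tendsto (fun ε : ℝ => u x ^ 2 + ε ^ 2) l (nhds (u x ^ 2)) := by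
      have hc : Continuous fun ε : ℝ => u x ^ 2 + ε ^ 2 :=
        continuous_const.add (continuous_pow 2)
      have := (hc.tendsto (0:ℝ)).mono_left (nhdsWithin_le_nhds (s := Set.Ioi (0:ℝ)))
      simpa using this
    exact (Real.continuousAt_rpow_const _ r (Or.inr hr)).tendsto.comp h1
  have hAlim : Filter.Tendsto (fun ε : ℝ => ∫ x in Ω, (u x ^ 2 + ε ^ 2) ^ (p/2)) l (nhds I) := by
    rw [← hIeq]
    refine tendsto_integral_filter_of_dominated_convergence
      (fun x => (u x ^ 2 + 1) ^ (p/2)) ?_ ?_ hbound_int ?_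
    · exact Filter.Eventually.of_forall fun ε =>
        (((hucont.pow 2).add continuous_const).rpow_const
          (fun x => Or.inr (by positivity))).aestronglyMeasurable
    · refine Filter.eventually_of_mem hmemIoc fun ε hε => ae_of_all _ fun x => ?_
      rw [Real.norm_eq_abs, abs_of_nonneg (Real.rpow_nonneg (by positivity) _)]
      refine Real.rpow_le_rpow (by positivity) ?_ (by positivity)
      nlinarith [hε.1, hε.2, sq_nonneg (u x)]
    · exact ae_of_all _ fun x => htend_base x (p/2) (by positivity)
  have hBlim : Filter.Tendsto
      (fun ε : ℝ => ∫ x in Ω, |(u x ^ 2 + ε ^ 2) ^ (p/(2*q)) - (ε^2) ^ (p/(2*q))| ^ q)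
      l (nhds I) := by
    have hIeq2 : ∫ x in Ω, |u x| ^ p = I := rfl
    rw [← hIeq2]
    refine tendsto_integral_filter_of_dominated_convergence
      (fun x => (u x ^ 2 + 1) ^ (p/2)) ?_ ?_ hbound_int ?_
    · refine Filter.Eventually.of_forall fun ε => ?_
      exact (((((hucont.pow 2).add continuous_const).rpow_const
        (fun x => Or.inr hp2q.le)).sub continuous_const).abs.rpow_const
        (fun x => Or.inr hq0.le)).aestronglyMeasurable
    · refine Filter.eventually_of_mem hmemIoc fun ε hε => ae_of_all _ fun x => ?_
      have hAx : (0:ℝ) < u x ^ 2 + ε ^ 2 := by nlinarith [hε.1, sq_nonneg (u x)]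
      have hvnn' : 0 ≤ (u x ^ 2 + ε ^ 2) ^ (p/(2*q)) - (ε^2) ^ (p/(2*q)) :=
        sub_nonneg.2 (Real.rpow_le_rpow (sq_nonneg ε) (by nlinarith [sq_nonneg (u x)]) hp2q.le)
      rw [Real.norm_eq_abs, abs_of_nonneg (Real.rpow_nonneg (abs_nonneg _) _),
        abs_of_nonneg hvnn']
      calc ((u x ^ 2 + ε ^ 2) ^ (p/(2*q)) - (ε^2) ^ (p/(2*q))) ^ q
          ≤ ((u x ^ 2 + ε ^ 2) ^ (p/(2*q))) ^ q :=
            Real.rpow_le_rpow hvnn' (sub_le_self _ (Real.rpow_nonneg (sq_nonneg ε) _)) hq0.le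
        _ = (u x ^ 2 + ε ^ 2) ^ (p/2) := by
            rw [← Real.rpow_mul hAx.le, show p/(2*q) * q = p/2 by field_simp [hq0']]
        _ ≤ (u x ^ 2 + 1) ^ (p/2) := by
            refine Real.rpow_le_rpow hAx.le ?_ (by positivity)
            nlinarith [hε.1, hε.2]
    · refine ae_of_all _ fun x => ?_
      have h1 := htend_base x (p/(2*q)) hp2q.le
      have h2 : Filter.Tendsto (fun ε : ℝ => (ε^2) ^ (p/(2*q))) l (nhds 0) := by
        have hsq : Filter.Tendsto (fun ε : ℝ => ε ^ 2) l (nhds 0) := by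
          have := ((continuous_pow 2).tendsto (0:ℝ)).mono_left
            (nhdsWithin_le_nhds (s := Set.Ioi (0:ℝ)))
          simpa using this
        have := (Real.continuousAt_rpow_const 0 (p/(2*q)) (Or.inr hp2q.le)).tendsto.comp hsq
        simpa [Function.comp_def, Real.zero_rpow hp2q.ne'] using this
      have h3 := h1.sub h2
      have h4 := ((Real.continuousAt_rpow_const _ q (Or.inr hq0.le)).comp
        continuous_abs.continuousAt).tendsto.comp h3
      have h5 : |(u x ^ 2) ^ (p/(2*q)) - 0| ^ q = |u x| ^ p := by
        rw [sub_zero, abs_of_nonneg (Real.rpow_nonneg (sq_nonneg _) _),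
          ← Real.rpow_mul (sq_nonneg (u x)), show p/(2*q) * q = p/2 by field_simp [hq0'],
          sq_rpow_half]
      rw [← h5]
      exact h4
  have hΦlim : Filter.Tendsto
      (fun ε : ℝ => ((p/q)^q * ((∫ x in Ω, (u x ^ 2 + ε ^ 2) ^ (p/2)) ^ ((p-q)/p) * G ^ (q/p))) /
        (∫ x in Ω, |(u x ^ 2 + ε ^ 2) ^ (p/(2*q)) - (ε^2) ^ (p/(2*q))| ^ q))
      l (nhds (((p/q)^q * (I ^ ((p-q)/p) * G ^ (q/p))) / I)) := by
    refine Filter.Tendsto.div ?_ hBlim hI.ne'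
    exact (((Real.continuousAt_rpow_const I ((p-q)/p) (Or.inl hI.ne')).tendsto.comp
      hAlim).mul_const _).const_mul _
  have hfinal : lambdaOneP Ω q ≤ ((p/q)^q * (I ^ ((p-q)/p) * G ^ (q/p))) / I :=
    ge_of_tendsto hΦlim (Filter.eventually_of_mem hmemIoc key)
  have hIq : (0:ℝ) < I ^ (q/p) := Real.rpow_pos_of_pos hI _
  have hII : I ^ ((p-q)/p) * I ^ (q/p) = I := by
    rw [← Real.rpow_add hI, show (p-q)/p + q/p = 1 by field_simp; ring, Real.rpow_one]
  have hLeq : ((p/q)^q * (I ^ ((p-q)/p) * G ^ (q/p))) / I = (p/q)^q * (G/I) ^ (q/p) := by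
    rw [Real.div_rpow hG hI.le]
    have hrw : I ^ ((p-q)/p) = I / I ^ (q/p) := by
      rw [eq_div_iff hIq.ne']; exact hII
    rw [hrw]
    field_simp
  rw [← hLeq]
  exact hfinal


end LambdaAux

/-- Extension of the Cheeger inequality: `p ↦ p (λ_{1,p}(Ω))^{1/p}` is increasing. -/
theorem lambdaOneP_monotone {n : ℕ}
    (Ω : Set (EuclideanSpace ℝ (Fin n))) (hne : Ω.Nonempty) (hΩ : IsOpen Ω)
    (hbd : Bornology.IsBounded Ω)
    (p q : ℝ) (hq : 1 < q) (hpq : q < p) :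
    q * lambdaOneP Ω q ^ (1 / q) ≤ p * lambdaOneP Ω p ^ (1 / p) := by
  have hq0 : (0:ℝ) < q := by linarith
  have hp0 : (0:ℝ) < p := by linarith
  have hl0 : 0 ≤ lambdaOneP Ω q := by
    rw [LambdaAux.lambdaOneP_eq]
    exact Real.sInf_nonneg (LambdaAux.raySet_nonneg Ω q)
  set c := q * lambdaOneP Ω q ^ (1/q) with hc
  have hc0 : 0 ≤ c := mul_nonneg hq0.le (Real.rpow_nonneg hl0 _)
  have hstep : ∀ R ∈ LambdaAux.raySet Ω p, c ≤ p * R ^ (1/p) := by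
    rintro R ⟨u, hu, hcs, hts, hu0, rfl⟩
    set R' := (∫ x in Ω, ‖gradient u x‖ ^ p) / (∫ x in Ω, |u x| ^ p) with hR'
    have hR0 : 0 ≤ R' :=
      div_nonneg (integral_nonneg fun x => Real.rpow_nonneg (norm_nonneg _) _)
        (integral_nonneg fun x => Real.rpow_nonneg (abs_nonneg _) _)
    have h1 : lambdaOneP Ω q ≤ (p/q)^q * R' ^ (q/p) :=
      LambdaAux.core Ω hΩ hbd p q hq hpq hu hcs hts hu0
    have h2 : lambdaOneP Ω q ^ (1/q) ≤ ((p/q)^q * R' ^ (q/p)) ^ (1/q) :=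
      Real.rpow_le_rpow hl0 h1 (by positivity)
    have h3 : ((p/q)^q * R' ^ (q/p)) ^ (1/q) = (p/q) * R' ^ (1/p) := by
      rw [Real.mul_rpow (Real.rpow_nonneg (by positivity) _) (Real.rpow_nonneg hR0 _),
        ← Real.rpow_mul (by positivity : (0:ℝ) ≤ p/q), mul_one_div, div_self hq0.ne',
        Real.rpow_one, ← Real.rpow_mul hR0,
        show q/p * (1/q) = 1/p by field_simp [hq0.ne', hp0.ne']]
    calc c = q * lambdaOneP Ω q ^ (1/q) := rfl
      _ ≤ q * ((p/q) * R' ^ (1/p)) := by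
          rw [← h3]; exact mul_le_mul_of_nonneg_left h2 hq0.le
      _ = p * R' ^ (1/p) := by field_simp
  have hlb : ∀ R ∈ LambdaAux.raySet Ω p, (c/p) ^ p ≤ R := by
    intro R hR
    have hR0 := LambdaAux.raySet_nonneg Ω p R hR
    have h1 : c / p ≤ R ^ (1/p) := (div_le_iff₀' hp0).2 (hstep R hR)
    have h2 : (c/p) ^ p ≤ (R ^ (1/p)) ^ p := Real.rpow_le_rpow (by positivity) h1 hp0.le
    rwa [← Real.rpow_mul hR0, one_div_mul_cancel hp0.ne', Real.rpow_one] at h2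
  have hsinf : (c/p) ^ p ≤ lambdaOneP Ω p := by
    rw [LambdaAux.lambdaOneP_eq]
    exact le_csInf (LambdaAux.raySet_nonempty Ω hne hΩ p) hlb
  have h4 : c/p ≤ lambdaOneP Ω p ^ (1/p) := by
    have := Real.rpow_le_rpow (by positivity : (0:ℝ) ≤ (c/p) ^ p) hsinf
      (by positivity : (0:ℝ) ≤ 1/p)
    rwa [← Real.rpow_mul (by positivity : (0:ℝ) ≤ c/p), mul_one_div, div_self hp0.ne',
      Real.rpow_one] at this
  calc q * lambdaOneP Ω q ^ (1/q) = c := rfl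
    _ ≤ lambdaOneP Ω p ^ (1/p) * p := (div_le_iff₀ hp0).1 h4
    _ = p * lambdaOneP Ω p ^ (1/p) := mul_comm _ _
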